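/- Let z, ζ ∈ ℂ with |z| ≤ 1/(4(1+B)) and |ζ| ≤ 1/(6(1+B)), and let h be analytic with |h(z)| ≤ min(1/3, (4/3)B|z|). If z = ζ e^{−h(z)/p} for some p ∈ ℕ, p ≥ 1, then |z − ζ| ≤ 3 B |ζ|². -/

import Mathlib

theorem fixed_point_close_to_zeta (p : ℕ) (hp : 1 ≤ p) (B : ℝ) (hB : 0 ≤ B)
    (h : ℂ → ℂ) (hh : Differentiable ℂ h)
    (z ζ : ℂ) (hz : ‖z‖ ≤ 1 / (4 * (1 + B))) (hζ : ‖ζ‖ ≤ 1 / (6 * (1 + B)))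
    (hhz : ‖h z‖ ≤ min (1 / 3) (4 / 3 * B * ‖z‖))
    (hfix : z = ζ * Complex.exp (-h z / p)) :
    ‖z - ζ‖ ≤ 3 * B * ‖ζ‖ ^ 2 := by
  set w : ℂ := -h z / p with hw
  have hp' : (1:ℝ) ≤ (p:ℝ) := by exact_mod_cast hp
  have hwle : ‖w‖ ≤ ‖h z‖ := by
    rw [hw, norm_div, norm_neg]
    have : (0:ℝ) < ‖(p:ℂ)‖ := by
      simp [Complex.norm_natCast]; linarith
    rw [div_le_iff₀ this]
    have : (1:ℝ) ≤ ‖(p:ℂ)‖ := by simpa [Complex.norm_natCast] using hp'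
    nlinarith [norm_nonneg (h z)]
  have hw13 : ‖w‖ ≤ 1/3 := hwle.trans (hhz.trans (min_le_left _ _))
  have hwB : ‖w‖ ≤ 4/3 * B * ‖z‖ := hwle.trans (hhz.trans (min_le_right _ _))
  -- norm of z in terms of ζ
  have hrew : w.re ≤ 1/3 := (Complex.abs_re_le_norm w).trans' (le_abs_self _) |>.trans hw13
  have hexp : Real.exp w.re ≤ 3/2 := by
    have h1 : Real.exp w.re ≤ Real.exp (1/3) := Real.exp_le_exp.mpr hrew
    have h2 : Real.exp (1/3) ≤ 3/2 := by
      have e3 : (Real.exp (1/3))^3 = Real.exp 1 := by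
        rw [← Real.exp_nat_mul]; norm_num
      have h3 : (Real.exp (1/3))^3 < (3/2:ℝ)^3 := by
        rw [e3]; nlinarith [Real.exp_one_lt_d9]
      have := (pow_lt_pow_iff_left₀ (le_of_lt (Real.exp_pos (1/3:ℝ))) (by norm_num : (0:ℝ) ≤ 3/2) (by norm_num : 3 ≠ 0)).mp h3
      linarith
    linarith
  have hznorm : ‖z‖ ≤ 3/2 * ‖ζ‖ := by
    rw [hfix, norm_mul, show ‖Complex.exp w‖ = Real.exp w.re by rw [Complex.norm_exp]]
    nlinarith [norm_nonneg ζ, Real.exp_pos w.re]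
  -- main bound
  have hes : ‖Complex.exp w - 1‖ ≤ ‖w‖ + ‖w‖^2 := by
    have := Complex.norm_exp_sub_one_sub_id_le (by simpa using hw13.trans (by norm_num) : ‖w‖ ≤ 1)
    calc ‖Complex.exp w - 1‖ = ‖(Complex.exp w - 1 - w) + w‖ := by ring_nf
      _ ≤ ‖Complex.exp w - 1 - w‖ + ‖w‖ := norm_add_le _ _
      _ ≤ ‖w‖^2 + ‖w‖ := by
          have : ‖Complex.exp w - 1 - w‖ ≤ ‖w‖^2 := by simpa [sq] using this
          linarith
      _ = ‖w‖ + ‖w‖^2 := by ring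
  have key : ‖z - ζ‖ ≤ ‖ζ‖ * (‖w‖ + ‖w‖^2) := by
    calc ‖z - ζ‖ = ‖ζ * (Complex.exp w - 1)‖ := by rw [hfix]; ring_nf
      _ = ‖ζ‖ * ‖Complex.exp w - 1‖ := norm_mul _ _
      _ ≤ ‖ζ‖ * (‖w‖ + ‖w‖^2) := by
          exact mul_le_mul_of_nonneg_left hes (norm_nonneg _)
  have h43 : ‖w‖ + ‖w‖^2 ≤ 4/3 * ‖w‖ := by nlinarith [norm_nonneg w]
  have : ‖z - ζ‖ ≤ ‖ζ‖ * (4/3 * (4/3 * B * ‖z‖)) := by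
    nlinarith [norm_nonneg ζ, norm_nonneg w]
  nlinarith [mul_nonneg (mul_nonneg hB (norm_nonneg ζ)) (norm_nonneg ζ), mul_le_mul_of_nonneg_left hznorm (mul_nonneg hB (norm_nonneg ζ))]
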